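/- Let X and Y be real Banach spaces, and let ρ, λ be nonnegative real numbers with λ < 1. Let g : X →L[ℝ] ℝ be a continuous linear functional with ‖g‖ ≤ ρ, let A : X →L[ℝ] X be a continuous linear map with ‖A‖ ≤ λ, and let B : Y →L[ℝ] X be a continuous linear map with ‖B‖ ≤ λ. Then I − A is invertible as a continuous linear map, and ‖g ∘ (I − A)⁻¹ ∘ B − g ∘ B‖ ≤ λ²·ρ/(1 − λ). -/

import Mathlib

/-- **Theorem 4.1 of the SDO paper (latent-variable case).** If `g : X →L[ℝ] ℝ` has norm
`≤ ρ`, `A : X →L[ℝ] X` has norm `≤ λ < 1`, and `B : Y →L[ℝ] X` has norm `≤ λ`, then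
`I - A` is invertible and the one-step gradient `g ∘ B` approximates the exact implicit
gradient `g ∘ (I - A)⁻¹ ∘ B` with error at most `λ²·ρ / (1 - λ)`. -/
theorem sdo_one_step_gradient_error_latent
    {X Y : Type*} [NormedAddCommGroup X] [NormedSpace ℝ X] [CompleteSpace X]
    [NormedAddCommGroup Y] [NormedSpace ℝ Y] [CompleteSpace Y]
    (ρ lam : ℝ) (hρ : 0 ≤ ρ) (hlam0 : 0 ≤ lam) (hlam1 : lam < 1)
    (g : X →L[ℝ] ℝ) (hg : ‖g‖ ≤ ρ)
    (A : X →L[ℝ] X) (hA : ‖A‖ ≤ lam)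
    (B : Y →L[ℝ] X) (hB : ‖B‖ ≤ lam) :
    IsUnit (1 - A) ∧
      ‖g.comp ((Ring.inverse (1 - A)).comp B) - g.comp B‖ ≤ lam ^ 2 * ρ / (1 - lam) := by
  have hAlt : ‖A‖ < 1 := lt_of_le_of_lt hA hlam1
  set u := Units.oneSub A hAlt with hu
  have hunit : IsUnit ((1 : X →L[ℝ] X) - A) := u.isUnit
  refine ⟨hunit, ?_⟩
  have hinv : Ring.inverse ((1 : X →L[ℝ] X) - A) = ↑u⁻¹ :=
    NormedRing.inverse_one_sub A hAlt
  -- u⁻¹ - 1 = u⁻¹ * A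
  have hkey : (↑u⁻¹ : X →L[ℝ] X) - 1 = ↑u⁻¹ * A := by
    have h1 : (↑u⁻¹ : X →L[ℝ] X) * (1 - A) = 1 := by
      have := u.inv_mul
      simpa [hu, Units.val_oneSub] using this
    have h2 : (↑u⁻¹ : X →L[ℝ] X) - ↑u⁻¹ * A = 1 := by
      rw [← h1, mul_sub, mul_one]
    exact sub_eq_iff_eq_add.mpr (by rw [add_comm]; exact sub_eq_iff_eq_add.mp h2)
  -- rewrite difference
  have hdiff : g.comp ((Ring.inverse ((1 : X →L[ℝ] X) - A)).comp B) - g.comp B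
      = g.comp (((↑u⁻¹ : X →L[ℝ] X) * A).comp B) := by
    rw [hinv, ← hkey]
    ext y
    simp [sub_smul]
  rw [hdiff]
  -- norm of u⁻¹
  have hpow : ∀ n : ℕ, ‖A ^ n‖ ≤ lam ^ n := by
    intro n
    induction n with
    | zero => rw [pow_zero]; exact ContinuousLinearMap.norm_id_le
    | succ n ih =>
      calc ‖A ^ (n + 1)‖ = ‖A * A ^ n‖ := by rw [pow_succ']
        _ ≤ ‖A‖ * ‖A ^ n‖ := norm_mul_le _ _
        _ ≤ lam * lam ^ n :=
            mul_le_mul hA ih (norm_nonneg _) hlam0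
        _ = lam ^ (n + 1) := by rw [pow_succ']
  have hsum : Summable fun n : ℕ => A ^ n :=
    summable_geometric_of_norm_lt_one hAlt
  have huinv : (↑u⁻¹ : X →L[ℝ] X) = ∑' n : ℕ, A ^ n := rfl
  have hnorm_uinv : ‖(↑u⁻¹ : X →L[ℝ] X)‖ ≤ (1 - lam)⁻¹ := by
    rw [huinv]
    exact tsum_of_norm_bounded (hasSum_geometric_of_lt_one hlam0 hlam1) hpow
  have h1lam : 0 < 1 - lam := by linarith
  calc ‖g.comp (((↑u⁻¹ : X →L[ℝ] X) * A).comp B)‖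
      ≤ ‖g‖ * ‖((↑u⁻¹ : X →L[ℝ] X) * A).comp B‖ := ContinuousLinearMap.opNorm_comp_le _ _
    _ ≤ ‖g‖ * (‖(↑u⁻¹ : X →L[ℝ] X) * A‖ * ‖B‖) := by
        gcongr; exact ContinuousLinearMap.opNorm_comp_le _ _
    _ ≤ ‖g‖ * ((‖(↑u⁻¹ : X →L[ℝ] X)‖ * ‖A‖) * ‖B‖) := by
        gcongr; exact norm_mul_le _ _
    _ ≤ ρ * (((1 - lam)⁻¹ * lam) * lam) := by
        have h1 := inv_nonneg.mpr h1lam.le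
        gcongr <;> positivity
    _ = lam ^ 2 * ρ / (1 - lam) := by field_simp
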